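/- For every real number f > 0, there exists a unique real number r* in the open interval (1 + f, ∞) satisfying (1 + f) · ln(r*) = r* − 1 − f. -/

import Mathlib

/-- For every `f > 0` there is a unique `r* ∈ (1+f, ∞)` with
`(1+f)·ln(r*) = r* - 1 - f`. -/
theorem stmt_6 (f : ℝ) (hf : 0 < f) :
    ∃! r : ℝ, r ∈ Set.Ioi (1 + f) ∧ (1 + f) * Real.log r = r - 1 - f := by
  set a : ℝ := 1 + f with ha_def
  have ha : 1 < a := by simp [ha_def]; linarith
  have ha0 : 0 < a := by linarith
  set g : ℝ → ℝ := fun r => a * Real.log r - r + a with hg_def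
  -- continuity on Ici a
  have hcont : ContinuousOn g (Set.Ici a) := by
    apply ContinuousOn.add
    · apply ContinuousOn.sub
      · exact continuousOn_const.mul (Real.continuousOn_log.mono (by
          intro x hx
          simp at hx ⊢
          intro h; rw [h] at hx; linarith))
      · exact continuousOn_id
    · exact continuousOn_const
  -- strict antitone on Ici a
  have hanti : StrictAntiOn g (Set.Ici a) := by
    apply strictAntiOn_of_deriv_neg (convex_Ici a) hcont
    intro r hr
    rw [interior_Ici] at hr
    have hr0 : (0:ℝ) < r := lt_trans ha0 hr
    have hd : HasDerivAt g (a * r⁻¹ - 1) r := by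
      exact (((Real.hasDerivAt_log (ne_of_gt hr0)).const_mul a).sub
        (hasDerivAt_id r)).add_const a
    rw [hd.deriv]
    have : a * r⁻¹ < 1 := by
      rw [mul_inv_lt_iff₀' hr0]
      simpa using hr
    linarith
  -- g a > 0
  have hga : 0 < g a := by
    have : 0 < Real.log a := Real.log_pos ha
    have : 0 < a * Real.log a := mul_pos ha0 this
    simp only [hg_def]
    linarith
  -- g (exp (2a)) < 0
  have hexp2a : 2 * a ≤ Real.exp a := by
    have h1 : a ≤ Real.exp (a - 1) := by
      have := Real.add_one_le_exp (a - 1); linarith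
    have h2 : (2:ℝ) ≤ Real.exp 1 := by
      have := Real.exp_one_gt_d9; linarith
    have : 2 * a ≤ Real.exp 1 * Real.exp (a - 1) :=
      mul_le_mul h2 h1 (by linarith) (Real.exp_pos 1).le
    rwa [← Real.exp_add, add_sub_cancel] at this
  have hgb : g (Real.exp (2 * a)) < 0 := by
    have heq : Real.exp (2 * a) = Real.exp a * Real.exp a := by
      rw [← Real.exp_add]; ring_nf
    have hsq : (2 * a) * (2 * a) ≤ Real.exp a * Real.exp a :=
      mul_le_mul hexp2a hexp2a (by linarith) (Real.exp_pos a).le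
    simp only [hg_def, Real.log_exp]
    nlinarith
  have hab : a ≤ Real.exp (2 * a) := by
    have := Real.add_one_le_exp (2 * a); linarith
  -- IVT
  obtain ⟨r, hr, hgr⟩ : ∃ r ∈ Set.Ioo a (Real.exp (2 * a)), g r = 0 := by
    have := intermediate_value_Ioo' hab (hcont.mono (by
      intro x hx; exact hx.1))
    have h0 : (0:ℝ) ∈ Set.Ioo (g (Real.exp (2 * a))) (g a) := ⟨hgb, hga⟩
    obtain ⟨r, hr, hgr⟩ := this h0
    exact ⟨r, hr, hgr⟩
  refine ⟨r, ⟨hr.1, ?_⟩, ?_⟩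
  · simp only [hg_def] at hgr
    simp only [ha_def] at hgr ⊢
    linarith
  · rintro y ⟨hy, hyeq⟩
    have hgy : g y = 0 := by
      simp only [hg_def]; simp only [ha_def] at hyeq ⊢; linarith
    exact hanti.injOn (Set.mem_Ici.2 (le_of_lt hy)) (Set.mem_Ici.2 (le_of_lt hr.1)) (hgy.trans hgr.symm)
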